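/- (Hadamard row-spreading bound) Let HD be a Randomized Hadamard Transform on ℝ^n (H scaled Walsh–Hadamard, D random diagonal Rademacher), and U ∈ ℝ^{n×d} an (α, β, 2)-conditioned matrix. Then for any constant c > 1, with probability at least 1 − 1/c, every row of HDU satisfies ‖(HDU)_i‖₂ ≤ (1 + √(8 log(cn))) · α/√n. -/

import Mathlib

open scoped BigOperators Matrix Classical

/-- Euclidean norm of a vector in `ℝ^n`. -/
noncomputable def enorm {n : ℕ} (v : Fin n → ℝ) : ℝ := Real.sqrt (∑ i, (v i) ^ 2)

/-- Frobenius norm of a matrix. -/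
noncomputable def fnorm {n d : ℕ} (M : Matrix (Fin n) (Fin d) ℝ) : ℝ :=
  Real.sqrt (∑ i, ∑ j, (M i j) ^ 2)

/-- The `±1` vector associated with a boolean sign pattern. -/
def signVec {n : ℕ} (s : Fin n → Bool) : Fin n → ℝ := fun i => if s i then 1 else -1

/-- The (unscaled) Walsh–Hadamard matrix `H_{2^s}`, defined recursively by the
block structure `H_{2k} = [[H_k, H_k], [H_k, −H_k]]` (with `H_1 = [1]`, so that
`H_2 = [[1,1],[1,−1]]`). -/
noncomputable def Had : (s : ℕ) → Matrix (Fin (2 ^ s)) (Fin (2 ^ s)) ℝ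
  | 0 => fun _ _ => 1
  | s + 1 => fun i j =>
      (if 2 ^ s ≤ i.val ∧ 2 ^ s ≤ j.val then -1 else 1) *
        Had s ⟨i.val % 2 ^ s, Nat.mod_lt _ (Nat.two_pow_pos s)⟩
              ⟨j.val % 2 ^ s, Nat.mod_lt _ (Nat.two_pow_pos s)⟩

open Finset in
/-- χ of a Bool. -/
noncomputable def rchi (b : Bool) : ℝ := if b then 1 else -1

lemma rchi_sq (b : Bool) : rchi b ^ 2 = 1 := by cases b <;> simp [rchi]

open Finset Real in
lemma mgf_eq (n : ℕ) (a : Fin n → ℝ) :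
    ∑ sg : Fin n → Bool, Real.exp (∑ t, a t * rchi (sg t))
      = ∏ t, (Real.exp (a t) + Real.exp (-a t)) := by
  have h1 : ∀ sg : Fin n → Bool, Real.exp (∑ t, a t * rchi (sg t))
      = ∏ t, Real.exp (a t * rchi (sg t)) := fun sg => Real.exp_sum _ _
  simp_rw [h1]
  rw [← Fintype.prod_sum (fun t (b : Bool) => Real.exp (a t * rchi b))]
  refine Finset.prod_congr rfl fun t _ => ?_
  simp [rchi, mul_comm]

open Finset Real in
lemma chernoff_one (n : ℕ) (a : Fin n → ℝ) (h lam : ℝ) (hh : 0 ≤ h) :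
    ((Finset.univ.filter (fun sg : Fin n → Bool => lam ≤ ∑ t, a t * rchi (sg t))).card : ℝ)
      ≤ 2 ^ n * Real.exp (h ^ 2 * (∑ t, a t ^ 2) / 2 - h * lam) := by
  have key : ((Finset.univ.filter (fun sg : Fin n → Bool =>
        lam ≤ ∑ t, a t * rchi (sg t))).card : ℝ) * Real.exp (h * lam)
      ≤ 2 ^ n * Real.exp (h ^ 2 * (∑ t, a t ^ 2) / 2) := by
    calc ((Finset.univ.filter (fun sg : Fin n → Bool =>
            lam ≤ ∑ t, a t * rchi (sg t))).card : ℝ) * Real.exp (h * lam)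
        = ∑ _sg ∈ Finset.univ.filter (fun sg : Fin n → Bool =>
            lam ≤ ∑ t, a t * rchi (sg t)), Real.exp (h * lam) := by
          rw [Finset.sum_const, nsmul_eq_mul]
      _ ≤ ∑ sg ∈ Finset.univ.filter (fun sg : Fin n → Bool =>
            lam ≤ ∑ t, a t * rchi (sg t)), Real.exp (h * ∑ t, a t * rchi (sg t)) := by
          refine Finset.sum_le_sum fun sg hsg => ?_
          rw [Finset.mem_filter] at hsg
          exact Real.exp_le_exp.2 (mul_le_mul_of_nonneg_left hsg.2 hh)
      _ ≤ ∑ sg : Fin n → Bool, Real.exp (h * ∑ t, a t * rchi (sg t)) := by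
          exact Finset.sum_le_sum_of_subset_of_nonneg (Finset.filter_subset _ _)
            (fun _ _ _ => (Real.exp_pos _).le)
      _ = ∑ sg : Fin n → Bool, Real.exp (∑ t, (h * a t) * rchi (sg t)) := by
          refine Finset.sum_congr rfl fun sg _ => ?_
          rw [Finset.mul_sum]; ring_nf
      _ = ∏ t, (Real.exp (h * a t) + Real.exp (-(h * a t))) := mgf_eq n _
      _ ≤ ∏ t, (2 * Real.exp ((h * a t) ^ 2 / 2)) := by
          refine Finset.prod_le_prod (fun t _ => by positivity) fun t _ => ?_
          have := Real.cosh_le_exp_half_sq (h * a t)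
          rw [Real.cosh_eq] at this
          nlinarith [this]
      _ = 2 ^ n * Real.exp (h ^ 2 * (∑ t, a t ^ 2) / 2) := by
          rw [Finset.prod_mul_distrib, Finset.prod_const, ← Real.exp_sum,
            Finset.card_univ, Fintype.card_fin]
          congr 1
          rw [Finset.mul_sum, Finset.sum_div]
          exact congrArg Real.exp (Finset.sum_congr rfl fun t _ => by ring)
  rw [Real.exp_sub, ← mul_div_assoc, le_div_iff₀ (Real.exp_pos _)]
  exact key

open Finset Real in
lemma chernoff_abs (n : ℕ) (a : Fin n → ℝ) (θ : ℝ) (hθ : 0 < θ) :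
    ((Finset.univ.filter (fun sg : Fin n → Bool =>
        θ * Real.sqrt (∑ t, a t ^ 2) < |∑ t, a t * rchi (sg t)|)).card : ℝ)
      ≤ 2 * 2 ^ n * Real.exp (-(θ ^ 2) / 2) := by
  set S := ∑ t, a t ^ 2 with hS
  have hS0 : 0 ≤ S := Finset.sum_nonneg fun t _ => sq_nonneg _
  rcases eq_or_lt_of_le hS0 with hS0' | hSpos
  · -- S = 0 : all a t = 0, filter is empty
    have ha : ∀ t, a t = 0 := by
      intro t
      have h2 : a t ^ 2 = 0 := (Finset.sum_eq_zero_iff_of_nonneg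
        (fun t _ => sq_nonneg (a t))).1 hS0'.symm t (Finset.mem_univ t)
      exact pow_eq_zero_iff two_ne_zero |>.1 h2
    have : (Finset.univ.filter (fun sg : Fin n → Bool =>
        θ * Real.sqrt S < |∑ t, a t * rchi (sg t)|)) = ∅ := by
      refine Finset.filter_eq_empty_iff.2 fun sg _ => ?_
      simp [ha, ← hS0', Real.sqrt_zero, not_lt]
    rw [this]
    simp only [Finset.card_empty, Nat.cast_zero]
    positivity
  · -- S > 0
    set lam := θ * Real.sqrt S with hlam
    set h := θ / Real.sqrt S with hh
    have hsq : 0 < Real.sqrt S := Real.sqrt_pos.2 hSpos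
    have hh0 : 0 ≤ h := le_of_lt (div_pos hθ hsq)
    have hexp : h ^ 2 * S / 2 - h * lam = -(θ ^ 2) / 2 := by
      have h1 : Real.sqrt S ^ 2 = S := Real.sq_sqrt hS0
      have e1 : h * Real.sqrt S = θ := by rw [hh]; exact div_mul_cancel₀ θ hsq.ne'
      field_simp [hh, hlam]
      linear_combination (-h^2) * h1 + (-2*h) * hlam + (h * Real.sqrt S - θ) * e1
    have hsub : (Finset.univ.filter (fun sg : Fin n → Bool =>
          lam < |∑ t, a t * rchi (sg t)|))
        ⊆ (Finset.univ.filter (fun sg : Fin n → Bool =>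
            lam ≤ ∑ t, a t * rchi (sg t)))
          ∪ (Finset.univ.filter (fun sg : Fin n → Bool =>
            lam ≤ ∑ t, (-a) t * rchi (sg t))) := by
      intro sg hsg
      rw [Finset.mem_filter] at hsg
      rcases le_abs.1 hsg.2.le with h1 | h1
      · exact Finset.mem_union_left _ (Finset.mem_filter.2 ⟨Finset.mem_univ _, h1⟩)
      · refine Finset.mem_union_right _ (Finset.mem_filter.2 ⟨Finset.mem_univ _, ?_⟩)
        calc lam ≤ -∑ t, a t * rchi (sg t) := h1
          _ = ∑ t, (-a) t * rchi (sg t) := by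
            rw [← Finset.sum_neg_distrib]
            exact Finset.sum_congr rfl fun t _ => by simp [neg_mul]
    have hcard := Finset.card_le_card hsub
    have hcard2 := le_trans hcard (Finset.card_union_le _ _)
    have b1 := chernoff_one n a h lam hh0
    have b2 := chernoff_one n (-a) h lam hh0
    have hSneg : ∑ t, (-a) t ^ 2 = S := by
      refine Finset.sum_congr rfl fun t _ => by simp
    rw [hSneg] at b2
    rw [hexp] at b1 b2
    calc ((Finset.univ.filter (fun sg : Fin n → Bool =>
          θ * Real.sqrt S < |∑ t, a t * rchi (sg t)|)).card : ℝ)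
        ≤ ((Finset.univ.filter (fun sg : Fin n → Bool =>
            lam ≤ ∑ t, a t * rchi (sg t))).card : ℝ)
          + ((Finset.univ.filter (fun sg : Fin n → Bool =>
            lam ≤ ∑ t, (-a) t * rchi (sg t))).card : ℝ) := by
          exact_mod_cast hcard2
      _ ≤ 2 ^ n * Real.exp (-(θ ^ 2) / 2) + 2 ^ n * Real.exp (-(θ ^ 2) / 2) :=
          add_le_add b1 b2
      _ = 2 * 2 ^ n * Real.exp (-(θ ^ 2) / 2) := by ring

-- Cauchy-Schwarz bound: events are empty when θ ≥ √n
open Finset Real in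
lemma event_empty (n : ℕ) (a : Fin n → ℝ) (θ : ℝ) (hθ : Real.sqrt n ≤ θ) (sg : Fin n → Bool) :
    ¬ (θ * Real.sqrt (∑ t, a t ^ 2) < |∑ t, a t * rchi (sg t)|) := by
  rw [not_lt]
  have hcs : (∑ t, a t * rchi (sg t)) ^ 2 ≤ (∑ t, a t ^ 2) * (∑ t, rchi (sg t) ^ 2) :=
    Finset.sum_mul_sq_le_sq_mul_sq _ _ _
  have h2 : (∑ t, rchi (sg t) ^ 2) = (n : ℝ) := by simp [rchi_sq]
  rw [h2] at hcs
  have habs : |∑ t, a t * rchi (sg t)| = Real.sqrt ((∑ t, a t * rchi (sg t)) ^ 2) :=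
    (Real.sqrt_sq_eq_abs _).symm
  rw [habs]
  calc Real.sqrt ((∑ t, a t * rchi (sg t)) ^ 2)
      ≤ Real.sqrt ((∑ t, a t ^ 2) * n) := Real.sqrt_le_sqrt (by linarith)
    _ = Real.sqrt (∑ t, a t ^ 2) * Real.sqrt n :=
        Real.sqrt_mul (Finset.sum_nonneg fun t _ => sq_nonneg _) _
    _ ≤ Real.sqrt (∑ t, a t ^ 2) * θ := by
        exact mul_le_mul_of_nonneg_left hθ (Real.sqrt_nonneg _)
    _ = θ * Real.sqrt (∑ t, a t ^ 2) := mul_comm _ _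
lemma Had_pm (s : ℕ) : ∀ i j, Had s i j = 1 ∨ Had s i j = -1 := by
  induction s with
  | zero => intro i j; left; rfl
  | succ s ih =>
    intro i j
    rcases ih ⟨i.val % 2 ^ s, Nat.mod_lt _ (Nat.two_pow_pos s)⟩
      ⟨j.val % 2 ^ s, Nat.mod_lt _ (Nat.two_pow_pos s)⟩ with h | h <;>
      by_cases hc : 2 ^ s ≤ i.val ∧ 2 ^ s ≤ j.val <;>
      simp [Had, h, hc]

lemma Had_sq (s : ℕ) (i j : Fin (2 ^ s)) : (Had s i j) ^ 2 = 1 := by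
  rcases Had_pm s i j with h | h <;> rw [h] <;> norm_num


lemma enorm_nonneg {n : ℕ} (v : Fin n → ℝ) : 0 ≤ _root_.enorm v := Real.sqrt_nonneg _

lemma enorm_eq_zero_real {n : ℕ} (v : Fin n → ℝ) (h : _root_.enorm v = 0) : v = 0 := by
  have h2 : ∑ i, (v i) ^ 2 = 0 := by
    have hnn : 0 ≤ ∑ i, (v i) ^ 2 := Finset.sum_nonneg fun i _ => sq_nonneg _
    rcases eq_or_lt_of_le hnn with h' | h'
    · exact h'.symm
    · exact absurd h (by simp [_root_.enorm]; positivity)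
  funext i
  have := (Finset.sum_eq_zero_iff_of_nonneg (fun i _ => sq_nonneg (v i))).1 h2 i
    (Finset.mem_univ i)
  exact pow_eq_zero_iff two_ne_zero |>.1 this

lemma dim_le {s d : ℕ} (β : ℝ) (U : Matrix (Fin (2 ^ s)) (Fin d) ℝ)
    (hβ : ∀ x : Fin d → ℝ, _root_.enorm x ≤ β * _root_.enorm (U.mulVec x)) : d ≤ 2 ^ s := by
  have hinj : Function.Injective U.mulVecLin := by
    rw [← LinearMap.ker_eq_bot, LinearMap.ker_eq_bot']
    intro x hx
    have hx' : U.mulVec x = 0 := hx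
    have h0 : _root_.enorm (U.mulVec x) = 0 := by rw [hx']; simp [_root_.enorm]
    have := hβ x
    rw [h0, mul_zero] at this
    exact enorm_eq_zero_real x (le_antisymm this (enorm_nonneg x))
  have := LinearMap.finrank_le_finrank_of_injective hinj
  simpa [Module.finrank_fin_fun] using this

/-- Hadamard row-spreading bound: let `n = 2^s`, let `HD` be a
Randomized Hadamard Transform (`H` the scaled Walsh–Hadamard matrix, `D` a
uniformly random diagonal `±1` matrix), and let `U ∈ ℝ^{n×d}` be
`(α,β,2)`-conditioned.  Then for any `c > 1`, with probability at least
`1 − 1/c` over the Rademacher signs, every row `i` of `HDU` satisfies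
`‖(HDU)_i‖₂ ≤ (1 + √(8 log(cn))) α/√n`. -/
theorem hadamard_row_spreading (s d : ℕ) (α β : ℝ)
    (U : Matrix (Fin (2 ^ s)) (Fin d) ℝ)
    (hα : fnorm U ≤ α) (hβ : ∀ x : Fin d → ℝ, _root_.enorm x ≤ β * _root_.enorm (U.mulVec x))
    (c : ℝ) (hc : 1 < c) :
    (1 : ℝ) - 1 / c ≤
      ((Finset.univ.filter (fun sg : Fin (2 ^ s) → Bool =>
          ∀ i : Fin (2 ^ s),
            _root_.enorm (fun k => ∑ t, ((Real.sqrt (2 ^ s))⁻¹ • Had s) i t * signVec sg t * U t k)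
              ≤ (1 + Real.sqrt (8 * Real.log (c * 2 ^ s))) * α / Real.sqrt (2 ^ s))).card : ℝ)
        / 2 ^ (2 ^ s) := by
  classical
  have hc0 : (0:ℝ) < c := lt_trans one_pos hc
  have hnpos : (0:ℝ) < (2:ℝ) ^ s := by positivity
  have hn1 : (1:ℝ) ≤ (2:ℝ) ^ s := one_le_pow₀ (by norm_num)
  have hcn1 : (1:ℝ) < c * 2 ^ s := by nlinarith
  have hL : 0 ≤ Real.log (c * 2 ^ s) := Real.log_nonneg hcn1.le
  set θ := 1 + Real.sqrt (8 * Real.log (c * 2 ^ s)) with hθdef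
  have hθ1 : (1:ℝ) ≤ θ := le_add_of_nonneg_right (Real.sqrt_nonneg _)
  have hθ0 : (0:ℝ) < θ := lt_of_lt_of_le one_pos hθ1
  have hα0 : 0 ≤ α := le_trans (Real.sqrt_nonneg _) hα
  have hsqn : 0 < Real.sqrt ((2:ℝ) ^ s) := Real.sqrt_pos.2 hnpos
  have h8 : 8 * Real.log (c * 2 ^ s) ≤ θ ^ 2 := by
    nlinarith [Real.sq_sqrt (show (0:ℝ) ≤ 8 * Real.log (c * 2 ^ s) by positivity),
      Real.sqrt_nonneg (8 * Real.log (c * 2 ^ s))]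
  clear_value θ
  set p : (Fin (2 ^ s) → Bool) → Prop := fun sg =>
    ∀ i : Fin (2 ^ s),
      _root_.enorm (fun k => ∑ t, ((Real.sqrt ((2:ℝ) ^ s))⁻¹ • Had s) i t * signVec sg t * U t k)
        ≤ θ * α / Real.sqrt ((2:ℝ) ^ s) with hpdef
  -- key pointwise implication
  have hrow : ∀ sg : Fin (2 ^ s) → Bool, ∀ i : Fin (2 ^ s),
      (∀ k : Fin d, |∑ t, (Had s i t * U t k) * rchi (sg t)|
          ≤ θ * Real.sqrt (∑ t, (U t k) ^ 2)) →
      _root_.enorm (fun k => ∑ t, ((Real.sqrt ((2:ℝ) ^ s))⁻¹ • Had s) i t * signVec sg t * U t k)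
        ≤ θ * α / Real.sqrt ((2:ℝ) ^ s) := by
    intro sg i hk
    have hv : ∀ k, (∑ t, ((Real.sqrt ((2:ℝ) ^ s))⁻¹ • Had s) i t * signVec sg t * U t k)
        = (Real.sqrt ((2:ℝ) ^ s))⁻¹ * ∑ t, (Had s i t * U t k) * rchi (sg t) := by
      intro k
      rw [Finset.mul_sum]
      refine Finset.sum_congr rfl fun t _ => ?_
      have hs : signVec sg t = rchi (sg t) := rfl
      rw [hs, Matrix.smul_apply, smul_eq_mul]
      ring
    unfold _root_.enorm
    have h1 : ∑ k, (∑ t, ((Real.sqrt ((2:ℝ) ^ s))⁻¹ • Had s) i t * signVec sg t * U t k) ^ 2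
        = ((Real.sqrt ((2:ℝ) ^ s))⁻¹) ^ 2
          * ∑ k, (∑ t, (Had s i t * U t k) * rchi (sg t)) ^ 2 := by
      rw [Finset.mul_sum]
      refine Finset.sum_congr rfl fun k _ => ?_
      rw [hv k]; ring
    rw [h1, Real.sqrt_mul (sq_nonneg _),
      Real.sqrt_sq (inv_nonneg.2 (Real.sqrt_nonneg _))]
    have hrhs : θ * α / Real.sqrt ((2:ℝ) ^ s)
        = (Real.sqrt ((2:ℝ) ^ s))⁻¹ * (θ * α) := by ring
    rw [hrhs]
    refine mul_le_mul_of_nonneg_left ?_ (inv_nonneg.2 (Real.sqrt_nonneg _))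
    have h2 : ∑ k, (∑ t, (Had s i t * U t k) * rchi (sg t)) ^ 2
        ≤ θ ^ 2 * ∑ k, ∑ t, (U t k) ^ 2 := by
      rw [Finset.mul_sum]
      refine Finset.sum_le_sum fun k _ => ?_
      have hUk : (0:ℝ) ≤ ∑ t, (U t k) ^ 2 := Finset.sum_nonneg fun t _ => sq_nonneg _
      calc (∑ t, (Had s i t * U t k) * rchi (sg t)) ^ 2
          = |∑ t, (Had s i t * U t k) * rchi (sg t)| ^ 2 := (sq_abs _).symm
        _ ≤ (θ * Real.sqrt (∑ t, (U t k) ^ 2)) ^ 2 :=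
            pow_le_pow_left₀ (abs_nonneg _) (hk k) 2
        _ = θ ^ 2 * (∑ t, (U t k) ^ 2) := by
            rw [mul_pow, Real.sq_sqrt hUk]
    calc Real.sqrt (∑ k, (∑ t, (Had s i t * U t k) * rchi (sg t)) ^ 2)
        ≤ Real.sqrt (θ ^ 2 * ∑ k, ∑ t, (U t k) ^ 2) := Real.sqrt_le_sqrt h2
      _ = θ * Real.sqrt (∑ k, ∑ t, (U t k) ^ 2) := by
          rw [Real.sqrt_mul (sq_nonneg θ), Real.sqrt_sq hθ0.le]
      _ = θ * fnorm U := by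
          unfold fnorm
          rw [Finset.sum_comm]
      _ ≤ θ * α := mul_le_mul_of_nonneg_left hα hθ0.le
  -- covering the bad set by scalar events
  have ha2 : ∀ (i : Fin (2 ^ s)) (k : Fin d),
      ∑ t, (Had s i t * U t k) ^ 2 = ∑ t, (U t k) ^ 2 := by
    intro i k
    refine Finset.sum_congr rfl fun t _ => ?_
    rw [mul_pow, Had_sq, one_mul]
  have hcover : (Finset.univ.filter fun sg : Fin (2 ^ s) → Bool => ¬ p sg)
      ⊆ Finset.univ.biUnion (fun ik : Fin (2 ^ s) × Fin d =>
          Finset.univ.filter (fun sg : Fin (2 ^ s) → Bool =>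
            θ * Real.sqrt (∑ t, (U t ik.2) ^ 2)
              < |∑ t, (Had s ik.1 t * U t ik.2) * rchi (sg t)|)) := by
    intro sg hsg
    rw [Finset.mem_filter] at hsg
    have hnp := hsg.2
    rw [hpdef] at hnp
    simp only [not_forall, not_le] at hnp
    obtain ⟨i, hi⟩ := hnp
    by_contra hmem
    simp only [Finset.mem_biUnion, Finset.mem_filter, Finset.mem_univ, true_and,
      not_exists, not_lt] at hmem
    exact absurd (hrow sg i fun k => hmem (i, k)) (not_le.2 hi)
  have hcard1 : ((Finset.univ.filter fun sg : Fin (2 ^ s) → Bool => ¬ p sg).card : ℝ)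
      ≤ ∑ ik : Fin (2 ^ s) × Fin d,
          ((Finset.univ.filter (fun sg : Fin (2 ^ s) → Bool =>
            θ * Real.sqrt (∑ t, (U t ik.2) ^ 2)
              < |∑ t, (Had s ik.1 t * U t ik.2) * rchi (sg t)|)).card : ℝ) := by
    have h1 := Finset.card_le_card hcover
    have h2 := le_trans h1 (Finset.card_biUnion_le)
    exact_mod_cast h2
  -- the main probabilistic bound
  have hbad : ((Finset.univ.filter fun sg : Fin (2 ^ s) → Bool => ¬ p sg).card : ℝ)
      ≤ 2 ^ (2 ^ s) / c := by
    rcases Nat.eq_zero_or_pos s with hs | hs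
    · -- s = 0 : every event is empty by Cauchy-Schwarz
      subst hs
      have hempty : (Finset.univ.filter fun sg : Fin (2 ^ 0) → Bool => ¬ p sg) = ∅ := by
        refine Finset.eq_empty_iff_forall_notMem.2 fun sg hsg => ?_
        have hmem := hcover hsg
        rw [Finset.mem_biUnion] at hmem
        obtain ⟨ik, _, hev⟩ := hmem
        rw [Finset.mem_filter] at hev
        have hth : Real.sqrt ((2 ^ 0 : ℕ) : ℝ) ≤ θ := by
          rw [show ((2 ^ 0 : ℕ) : ℝ) = 1 by norm_num, Real.sqrt_one]; exact hθ1
        have hem := event_empty (2 ^ 0) (fun t => Had 0 ik.1 t * U t ik.2) θ hth sg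
        simp only [ha2 ik.1 ik.2] at hem
        exact hem hev.2
      rw [hempty]
      simp only [Finset.card_empty, Nat.cast_zero]
      positivity
    · -- s ≥ 1
      have hd : d ≤ 2 ^ s := dim_le β U hβ
      have hn2 : (2:ℝ) ≤ (2:ℝ) ^ s := by
        calc (2:ℝ) = 2 ^ 1 := (pow_one 2).symm
          _ ≤ 2 ^ s := pow_le_pow_right₀ (by norm_num) hs
      have hev : ∀ ik : Fin (2 ^ s) × Fin d,
          ((Finset.univ.filter (fun sg : Fin (2 ^ s) → Bool =>
            θ * Real.sqrt (∑ t, (U t ik.2) ^ 2)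
              < |∑ t, (Had s ik.1 t * U t ik.2) * rchi (sg t)|)).card : ℝ)
          ≤ 2 * 2 ^ (2 ^ s) * Real.exp (-(θ ^ 2) / 2) := by
        intro ik
        have h := chernoff_abs (2 ^ s) (fun t => Had s ik.1 t * U t ik.2) θ hθ0
        simp only [ha2 ik.1 ik.2] at h
        exact h
      have hexp : Real.exp (-(θ ^ 2) / 2) ≤ ((c * 2 ^ s) ^ 4)⁻¹ := by
        calc Real.exp (-(θ ^ 2) / 2) ≤ Real.exp (-(4 * Real.log (c * 2 ^ s))) :=
              Real.exp_le_exp.2 (by linarith)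
          _ = ((c * 2 ^ s) ^ 4)⁻¹ := by
              rw [Real.exp_neg]
              congr 1
              rw [show (4:ℝ) * Real.log (c * 2 ^ s)
                  = ((4:ℕ):ℝ) * Real.log (c * 2 ^ s) by norm_num,
                Real.exp_nat_mul, Real.exp_log (by positivity)]
      calc ((Finset.univ.filter fun sg : Fin (2 ^ s) → Bool => ¬ p sg).card : ℝ)
          ≤ ∑ ik : Fin (2 ^ s) × Fin d, ((Finset.univ.filter
              (fun sg : Fin (2 ^ s) → Bool =>
                θ * Real.sqrt (∑ t, (U t ik.2) ^ 2)
                  < |∑ t, (Had s ik.1 t * U t ik.2) * rchi (sg t)|)).card : ℝ) := hcard1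
        _ ≤ ∑ _ik : Fin (2 ^ s) × Fin d, 2 * 2 ^ (2 ^ s) * Real.exp (-(θ ^ 2) / 2) :=
            Finset.sum_le_sum fun ik _ => hev ik
        _ = ((2 ^ s : ℕ) : ℝ) * (d : ℝ) * (2 * 2 ^ (2 ^ s) * Real.exp (-(θ ^ 2) / 2)) := by
            rw [Finset.sum_const, Finset.card_univ, Fintype.card_prod, Fintype.card_fin,
              Fintype.card_fin, nsmul_eq_mul]
            push_cast
            ring
        _ ≤ (2:ℝ) ^ s * (2:ℝ) ^ s * (2 * 2 ^ (2 ^ s) * ((c * 2 ^ s) ^ 4)⁻¹) := by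
            have hd' : (d : ℝ) ≤ (2:ℝ) ^ s := by
              have : ((d:ℕ):ℝ) ≤ ((2 ^ s : ℕ):ℝ) := Nat.cast_le.2 hd
              push_cast at this
              exact this
            have h1 : ((2 ^ s : ℕ) : ℝ) = (2:ℝ) ^ s := by push_cast; ring
            rw [h1]
            have he := Real.exp_pos (-(θ ^ 2) / 2)
            refine mul_le_mul (mul_le_mul le_rfl hd' (Nat.cast_nonneg d) (by positivity))
              (mul_le_mul_of_nonneg_left hexp (by positivity)) (by positivity) (by positivity)
        _ ≤ 2 ^ (2 ^ s) / c := by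
            have hm2 : (4:ℝ) ≤ ((2:ℝ) ^ s) ^ 2 := by nlinarith [hn2]
            have hc3 : (1:ℝ) ≤ c ^ 3 := one_le_pow₀ hc.le
            have key : 2 * ((2:ℝ) ^ s) ^ 2 * c ≤ (c * 2 ^ s) ^ 4 := by
              have h1 : 2 * ((2:ℝ) ^ s) ^ 2 * c ≤ ((2:ℝ) ^ s) ^ 4 * c := by
                nlinarith [mul_nonneg hc0.le (mul_nonneg (sq_nonneg ((2:ℝ) ^ s))
                  (sub_nonneg.2 (show (2:ℝ) ≤ ((2:ℝ) ^ s) ^ 2 by linarith)))]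
              have h2 : ((2:ℝ) ^ s) ^ 4 * c ≤ ((2:ℝ) ^ s) ^ 4 * c ^ 4 := by
                refine mul_le_mul_of_nonneg_left ?_ (by positivity)
                nlinarith [mul_nonneg hc0.le (sub_nonneg.2 hc3)]
              calc 2 * ((2:ℝ) ^ s) ^ 2 * c ≤ ((2:ℝ) ^ s) ^ 4 * c := h1
                _ ≤ ((2:ℝ) ^ s) ^ 4 * c ^ 4 := h2
                _ = (c * 2 ^ s) ^ 4 := by ring
            have hP : (0:ℝ) < 2 ^ (2 ^ s) := by positivity
            rw [div_eq_mul_inv]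
            have hcm : (0:ℝ) < (c * 2 ^ s) ^ 4 := by positivity
            rw [mul_comm ((2:ℝ) ^ (2 ^ s))]
            have expand : (2:ℝ) ^ s * 2 ^ s * (2 * 2 ^ (2 ^ s) * ((c * 2 ^ s) ^ 4)⁻¹)
                = (2 * ((2:ℝ) ^ s) ^ 2) * 2 ^ (2 ^ s) * ((c * 2 ^ s) ^ 4)⁻¹ := by ring
            rw [expand]
            rw [← sub_nonneg]
            have : c⁻¹ * 2 ^ (2 ^ s) - 2 * ((2:ℝ) ^ s) ^ 2 * 2 ^ (2 ^ s) * ((c * 2 ^ s) ^ 4)⁻¹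
                = (2 ^ (2 ^ s) * ((c * 2 ^ s) ^ 4 - 2 * ((2:ℝ) ^ s) ^ 2 * c))
                  * (c⁻¹ * ((c * 2 ^ s) ^ 4)⁻¹) := by
              field_simp
            rw [this]
            have h1 : (0:ℝ) ≤ (c * 2 ^ s) ^ 4 - 2 * ((2:ℝ) ^ s) ^ 2 * c := by linarith
            positivity
  -- conclude
  have hsplit : (Finset.univ.filter p).card
      + (Finset.univ.filter fun sg => ¬ p sg).card = 2 ^ (2 ^ s) := by
    rw [Finset.card_filter_add_card_filter_not, Finset.card_univ]
    simp [Fintype.card_fun]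
  have hgood : ((Finset.univ.filter p).card : ℝ)
      = 2 ^ (2 ^ s) - ((Finset.univ.filter fun sg => ¬ p sg).card : ℝ) := by
    have h := congrArg (Nat.cast : ℕ → ℝ) hsplit
    push_cast at h
    linarith
  have hP : (0:ℝ) < 2 ^ (2 ^ s) := by positivity
  rw [le_div_iff₀ hP]
  have heq : (1 - 1 / c) * 2 ^ (2 ^ s) = 2 ^ (2 ^ s) - 2 ^ (2 ^ s) / c := by ring
  rw [heq]
  show (2:ℝ) ^ (2 ^ s) - 2 ^ (2 ^ s) / c ≤ ((Finset.univ.filter p).card : ℝ)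
  rw [hgood]
  linarith
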